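/- Let F be the regular distribution whose revenue curve in quantile space is r(q) = 10q for q ≤ 0.1 and r(q) = 1 for q > 0.1 (the equal-revenue distribution truncated at value 10, in the limit of vanishing spreading interval). Then the expected revenue of empirical revenue maximization with one sample is ERM(F,1) = ∫_0^1 r(q) dq = 19/20, the expected revenue with two samples is ERM(F,2) = 1 - (0.1)^2·(1/3) - 2·(0.1)·(0.8)·(1/2) = 11/12, and hence ERM(F,2) < ERM(F,1). -/

import Mathlib

open MeasureTheory Set

/-- Revenue curve of the equal-revenue distribution truncated at value 10:
r(q) = min(10q, 1). -/
noncomputable def rTrunc (q : ℝ) : ℝ := min (10 * q) 1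

/-- The corresponding value function v(q) = r(q)/q. -/
noncomputable def vTrunc (q : ℝ) : ℝ := rTrunc q / q

/-- The revenue obtained by ERM from two samples with quantiles `q₁, q₂` for the
truncated equal-revenue distribution: if the larger value is at least twice the
smaller, post the larger value, else post the smaller value; ties among equal
values are broken in favor of the larger quantile. -/
noncomputable def e₂Trunc (q₁ q₂ : ℝ) : ℝ :=
  if 2 * min (vTrunc q₁) (vTrunc q₂) ≤ max (vTrunc q₁) (vTrunc q₂) then
    -- post the price with the higher value (tie → larger quantile)
    (if vTrunc q₂ < vTrunc q₁ then rTrunc q₁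
     else if vTrunc q₁ < vTrunc q₂ then rTrunc q₂
     else rTrunc (max q₁ q₂))
  else
    -- post the price with the lower value (tie → larger quantile)
    (if vTrunc q₁ < vTrunc q₂ then rTrunc q₁
     else if vTrunc q₂ < vTrunc q₁ then rTrunc q₂
     else rTrunc (max q₁ q₂))

/-! ### Auxiliary facts about `rTrunc` and `vTrunc` -/

lemma rT_low {q : ℝ} (h : q ≤ 1/10) : rTrunc q = 10 * q :=
  min_eq_left (by linarith)

lemma rT_high {q : ℝ} (h : 1/10 ≤ q) : rTrunc q = 1 :=
  min_eq_right (by linarith)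

lemma vT_low {q : ℝ} (h0 : 0 < q) (h : q ≤ 1/10) : vTrunc q = 10 := by
  unfold vTrunc
  rw [rT_low h, mul_div_assoc, div_self h0.ne', mul_one]

lemma vT_high {q : ℝ} (h : 1/10 ≤ q) : vTrunc q = 1/q := by
  unfold vTrunc
  rw [rT_high h]

/-- A.e. simplification of `e₂Trunc`. -/
noncomputable def gFun (q₁ q₂ : ℝ) : ℝ :=
  if q₁ ≤ 1/10 then
    (if q₂ ≤ 1/10 then 10 * max q₁ q₂ else if q₂ ≤ 1/5 then 1 else 10 * q₁)
  else if q₁ ≤ 1/5 then 1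
  else (if q₂ ≤ 1/10 then 10 * q₂ else 1)

lemma e2_eq_g {q₁ q₂ : ℝ} (h₁ : 0 < q₁) (h₂ : 0 < q₂)
    (n₁ : q₁ ≠ 1/10) (n₁' : q₁ ≠ 1/5) (n₂ : q₂ ≠ 1/10) (n₂' : q₂ ≠ 1/5) :
    e₂Trunc q₁ q₂ = gFun q₁ q₂ := by
  rcases lt_or_gt_of_ne n₁ with hq1 | hq1
  · -- q₁ < 1/10
    have v1 := vT_low h₁ hq1.le
    rcases lt_or_gt_of_ne n₂ with hq2 | hq2
    · -- q₂ < 1/10 : tie at value 10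
      have v2 := vT_low h₂ hq2.le
      unfold e₂Trunc gFun
      rw [v1, v2, min_self, max_self, if_neg (by norm_num : ¬ (2*(10:ℝ) ≤ 10)),
        if_neg (lt_irrefl (10:ℝ)), if_neg (lt_irrefl (10:ℝ)), if_pos hq1.le, if_pos hq2.le,
        rT_low (max_le hq1.le hq2.le)]
    · -- q₂ > 1/10
      have v2 := vT_high hq2.le
      have hv2lt : 1/q₂ < 10 := by rw [div_lt_iff₀ h₂]; linarith
      rcases lt_or_gt_of_ne n₂' with hq2' | hq2'
      · -- 1/10 < q₂ < 1/5 : post lower value, revenue rTrunc q₂ = 1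
        have h5 : (5:ℝ) < 1/q₂ := by rw [lt_div_iff₀ h₂]; linarith
        unfold e₂Trunc gFun
        rw [v1, v2, min_eq_right hv2lt.le, max_eq_left hv2lt.le,
          if_neg (by linarith : ¬ (2*(1/q₂) ≤ 10)),
          if_neg (not_lt.mpr hv2lt.le), if_pos hv2lt, rT_high hq2.le,
          if_pos hq1.le, if_neg (not_le.mpr hq2), if_pos hq2'.le]
      · -- q₂ > 1/5 : post higher value, revenue rTrunc q₁ = 10 q₁
        have h5 : 1/q₂ < 5 := by rw [div_lt_iff₀ h₂]; linarith
        unfold e₂Trunc gFun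
        rw [v1, v2, min_eq_right hv2lt.le, max_eq_left hv2lt.le,
          if_pos (by linarith : 2*(1/q₂) ≤ 10), if_pos hv2lt, rT_low hq1.le,
          if_pos hq1.le, if_neg (not_le.mpr hq2), if_neg (not_le.mpr hq2')]
  · -- q₁ > 1/10
    have v1 := vT_high hq1.le
    have hv1lt : 1/q₁ < 10 := by rw [div_lt_iff₀ h₁]; linarith
    rcases lt_or_gt_of_ne n₂ with hq2 | hq2
    · -- q₂ < 1/10
      have v2 := vT_low h₂ hq2.le
      rcases lt_or_gt_of_ne n₁' with hq1' | hq1'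
      · -- 1/10 < q₁ < 1/5 : post lower value, revenue rTrunc q₁ = 1
        have h5 : (5:ℝ) < 1/q₁ := by rw [lt_div_iff₀ h₁]; linarith
        unfold e₂Trunc gFun
        rw [v1, v2, min_eq_left hv1lt.le, max_eq_right hv1lt.le,
          if_neg (by linarith : ¬ (2*(1/q₁) ≤ 10)),
          if_pos hv1lt, rT_high hq1.le, if_neg (not_le.mpr hq1), if_pos hq1'.le]
      · -- q₁ > 1/5 : post higher value, revenue rTrunc q₂ = 10 q₂
        have h5 : 1/q₁ < 5 := by rw [div_lt_iff₀ h₁]; linarith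
        unfold e₂Trunc gFun
        rw [v1, v2, min_eq_left hv1lt.le, max_eq_right hv1lt.le,
          if_pos (by linarith : 2*(1/q₁) ≤ 10),
          if_neg (not_lt.mpr hv1lt.le), if_pos hv1lt, rT_low hq2.le,
          if_neg (not_le.mpr hq1), if_neg (not_le.mpr hq1'), if_pos hq2.le]
    · -- q₂ > 1/10 : both prices give revenue 1
      have v2 := vT_high hq2.le
      have hmax : (1:ℝ)/10 ≤ max q₁ q₂ := le_trans hq1.le (le_max_left _ _)
      have hr1 := rT_high hq1.le
      have hr2 := rT_high hq2.le
      have hrm := rT_high hmax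
      have hg : gFun q₁ q₂ = 1 := by
        simp only [gFun, if_neg (not_le.mpr hq1), if_neg (not_le.mpr hq2)]
        split_ifs <;> rfl
      rw [hg]
      unfold e₂Trunc
      split_ifs <;> simp [hr1, hr2, hrm]

/-- pointwise bound -/
lemma g_abs {q₁ q₂ : ℝ} (h₁ : q₁ ∈ Icc (0:ℝ) 1) (h₂ : q₂ ∈ Icc (0:ℝ) 1) :
    ‖gFun q₁ q₂‖ ≤ 10 := by
  obtain ⟨a1, b1⟩ := h₁
  obtain ⟨a2, b2⟩ := h₂
  have hmax : max q₁ q₂ ≤ 1 := max_le b1 b2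
  have hmax0 : 0 ≤ max q₁ q₂ := le_max_of_le_left a1
  rw [Real.norm_eq_abs]
  unfold gFun
  split_ifs <;> rw [abs_le] <;> constructor <;> nlinarith

lemma g_meas : Measurable (fun p : ℝ × ℝ => gFun p.1 p.2) := by
  unfold gFun
  apply Measurable.ite (measurableSet_le measurable_fst measurable_const)
  · apply Measurable.ite (measurableSet_le measurable_snd measurable_const)
    · exact (measurable_fst.max measurable_snd).const_mul 10
    · exact Measurable.ite (measurableSet_le measurable_snd measurable_const)
        measurable_const (measurable_fst.const_mul 10)
  · apply Measurable.ite (measurableSet_le measurable_fst measurable_const) measurable_const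
    exact Measurable.ite (measurableSet_le measurable_snd measurable_const)
        (measurable_snd.const_mul 10) measurable_const

lemma g_sec_meas (q₁ : ℝ) : Measurable (gFun q₁) :=
  g_meas.comp (measurable_const.prodMk measurable_id)

/-- interval integrability of sections -/
lemma g_sec_int {q₁ : ℝ} (hq : q₁ ∈ Icc (0:ℝ) 1) {a b : ℝ}
    (hab : Set.uIoc a b ⊆ Icc (0:ℝ) 1) : IntervalIntegrable (gFun q₁) volume a b := by
  rw [intervalIntegrable_iff]
  apply Measure.integrableOn_of_bounded (M := 10)
  · exact (measure_mono hab).trans_lt (by simp) |>.ne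
  · exact (g_sec_meas q₁).aestronglyMeasurable
  · exact (ae_restrict_iff' measurableSet_uIoc).mpr
      (ae_of_all _ fun y hy => g_abs hq (hab hy))

/-- congruence for interval integrals away from a finite set -/
lemma int_congr_finite {f g : ℝ → ℝ} {a b : ℝ} (s : Set ℝ) (hs : s.Finite)
    (h : ∀ x ∈ Set.uIoc a b, x ∉ s → f x = g x) :
    ∫ x in a..b, f x = ∫ x in a..b, g x := by
  apply intervalIntegral.integral_congr_ae
  have h0 : (volume : Measure ℝ) s = 0 := hs.measure_zero _
  have : ∀ᵐ x : ℝ, x ∉ s := measure_eq_zero_iff_ae_notMem.mp h0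
  filter_upwards [this] with x hx hmem
  exact h x hmem hx

/-- The inner integral. -/
noncomputable def HFun (q₁ : ℝ) : ℝ := ∫ q₂ in (0:ℝ)..1, gFun q₁ q₂

lemma H_low {q : ℝ} (h0 : 0 ≤ q) (h1 : q ≤ 1/10) :
    HFun q = 5*q^2 + 8*q + 3/20 := by
  have hq : q ∈ Icc (0:ℝ) 1 := ⟨h0, by linarith⟩
  have sub1 : Set.uIoc 0 q ⊆ Icc (0:ℝ) 1 := by
    rw [Set.uIoc_of_le h0]; exact (Set.Ioc_subset_Icc_self).trans (Icc_subset_Icc le_rfl (by linarith))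
  have sub2 : Set.uIoc q (1/10) ⊆ Icc (0:ℝ) 1 := by
    rw [Set.uIoc_of_le h1]; exact (Set.Ioc_subset_Icc_self).trans (Icc_subset_Icc h0 (by norm_num))
  have sub3 : Set.uIoc (1/10 : ℝ) (1/5) ⊆ Icc (0:ℝ) 1 := by
    rw [Set.uIoc_of_le (by norm_num)]
    exact (Set.Ioc_subset_Icc_self).trans (Icc_subset_Icc (by norm_num) (by norm_num))
  have sub4 : Set.uIoc (1/5 : ℝ) 1 ⊆ Icc (0:ℝ) 1 := by
    rw [Set.uIoc_of_le (by norm_num)]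
    exact (Set.Ioc_subset_Icc_self).trans (Icc_subset_Icc (by norm_num) le_rfl)
  have i1 := g_sec_int hq sub1
  have i2 := g_sec_int hq sub2
  have i3 := g_sec_int hq sub3
  have i4 := g_sec_int hq sub4
  have e1 : ∫ y in (0:ℝ)..q, gFun q y = 10 * q * q := by
    rw [intervalIntegral.integral_congr (g := fun _ => 10 * q)]
    · simp [mul_assoc]
    · intro y hy
      rw [Set.uIcc_of_le h0, Set.mem_Icc] at hy
      simp only [gFun, if_pos h1, if_pos (hy.2.trans h1), max_eq_left hy.2]
  have e2 : ∫ y in q..(1/10:ℝ), gFun q y = 1/20 - 5*q^2 := by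
    rw [intervalIntegral.integral_congr (g := fun y => 10 * y)]
    · rw [intervalIntegral.integral_const_mul, integral_id]
      ring
    · intro y hy
      rw [Set.uIcc_of_le h1, Set.mem_Icc] at hy
      simp only [gFun, if_pos h1, if_pos hy.2, max_eq_right hy.1]
  have e3 : ∫ y in (1/10:ℝ)..(1/5), gFun q y = 1/10 := by
    rw [intervalIntegral.integral_congr (g := fun _ => (1:ℝ))]
    · simp; norm_num
    · intro y hy
      rw [Set.uIcc_of_le (by norm_num), Set.mem_Icc] at hy
      by_cases hy10 : y ≤ 1/10
      · have hy' : y = 1/10 := le_antisymm hy10 hy.1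
        subst hy'
        simp only [gFun, if_pos h1, if_pos (le_refl ((1:ℝ)/10)), max_eq_right h1]
        norm_num
      · simp only [gFun, if_pos h1, if_neg hy10, if_pos hy.2]
  have e4 : ∫ y in (1/5:ℝ)..1, gFun q y = 8 * q := by
    rw [int_congr_finite (g := fun _ => 10 * q) ∅ (Set.finite_empty)]
    · simp; ring
    · intro y hy _
      rw [Set.uIoc_of_le (by norm_num), Set.mem_Ioc] at hy
      have h5 : ¬ y ≤ 1/5 := not_le.mpr hy.1
      simp only [gFun, if_pos h1, if_neg (by linarith : ¬ y ≤ 1/10), if_neg h5]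
  unfold HFun
  rw [← intervalIntegral.integral_add_adjacent_intervals (i1.trans i2 |>.trans i3) i4,
      ← intervalIntegral.integral_add_adjacent_intervals (i1.trans i2) i3,
      ← intervalIntegral.integral_add_adjacent_intervals i1 i2, e1, e2, e3, e4]
  ring

lemma H_mid {q : ℝ} (h0 : 1/10 < q) (h1 : q ≤ 1/5) : HFun q = 1 := by
  unfold HFun
  rw [intervalIntegral.integral_congr (g := fun _ => (1:ℝ))]
  · simp
  · intro y _
    simp only [gFun, if_neg (not_le.mpr h0), if_pos h1]

lemma sub01 {a b : ℝ} (ha : 0 ≤ a) (hb : b ≤ 1) (hab : a ≤ b) :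
    Set.uIoc a b ⊆ Icc (0:ℝ) 1 := by
  rw [Set.uIoc_of_le hab]
  exact Set.Ioc_subset_Icc_self.trans (Icc_subset_Icc ha hb)

lemma H_high {q : ℝ} (h0 : 1/5 < q) (h1 : q ≤ 1) : HFun q = 19/20 := by
  have hq : q ∈ Icc (0:ℝ) 1 := ⟨by linarith, h1⟩
  have i1 : IntervalIntegrable (gFun q) volume 0 (1/10) :=
    g_sec_int hq (sub01 le_rfl (by norm_num) (by norm_num))
  have i2 : IntervalIntegrable (gFun q) volume (1/10) 1 :=
    g_sec_int hq (sub01 (by norm_num) le_rfl (by norm_num))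
  have e1 : ∫ y in (0:ℝ)..(1/10), gFun q y = 1/20 := by
    rw [intervalIntegral.integral_congr (g := fun y => 10 * y)]
    · rw [intervalIntegral.integral_const_mul, integral_id]; norm_num
    · intro y hy
      rw [Set.uIcc_of_le (by norm_num), Set.mem_Icc] at hy
      simp only [gFun, if_neg (by linarith : ¬ q ≤ 1/10), if_neg (not_le.mpr h0),
        if_pos hy.2]
  have e2 : ∫ y in (1/10:ℝ)..1, gFun q y = 9/10 := by
    rw [intervalIntegral.integral_congr (g := fun _ => (1:ℝ))]
    · simp; norm_num
    · intro y hy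
      rw [Set.uIcc_of_le (by norm_num), Set.mem_Icc] at hy
      by_cases hy10 : y ≤ 1/10
      · have hy' : y = 1/10 := le_antisymm hy10 hy.1
        subst hy'
        simp only [gFun, if_neg (by linarith : ¬ q ≤ 1/10), if_neg (not_le.mpr h0),
          if_pos (le_refl ((1:ℝ)/10))]
        norm_num
      · simp only [gFun, if_neg (by linarith : ¬ q ≤ 1/10), if_neg (not_le.mpr h0),
          if_neg hy10]
  unfold HFun
  rw [← intervalIntegral.integral_add_adjacent_intervals i1 i2, e1, e2]
  norm_num

lemma one_sample : (∫ q in (0:ℝ)..1, rTrunc q) = 19/20 := by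
  have c : Continuous rTrunc := (continuous_const.mul continuous_id).min continuous_const
  have i1 : IntervalIntegrable rTrunc volume 0 (1/10) := c.intervalIntegrable _ _
  have i2 : IntervalIntegrable rTrunc volume (1/10) 1 := c.intervalIntegrable _ _
  rw [← intervalIntegral.integral_add_adjacent_intervals i1 i2]
  have e1 : ∫ q in (0:ℝ)..(1/10), rTrunc q = 1/20 := by
    rw [intervalIntegral.integral_congr (g := fun q => 10 * q)]
    · rw [intervalIntegral.integral_const_mul, integral_id]; norm_num
    · intro y hy
      rw [Set.uIcc_of_le (by norm_num), Set.mem_Icc] at hy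
      exact rT_low hy.2
  have e2 : ∫ q in (1/10:ℝ)..1, rTrunc q = 9/10 := by
    rw [intervalIntegral.integral_congr (g := fun _ => (1:ℝ))]
    · simp; norm_num
    · intro y hy
      rw [Set.uIcc_of_le (by norm_num), Set.mem_Icc] at hy
      exact rT_high hy.1
  rw [e1, e2]; norm_num

lemma two_sample : (∫ p in (Set.Icc (0:ℝ) 1) ×ˢ (Set.Icc (0:ℝ) 1), e₂Trunc p.1 p.2) = 11/12 := by
  have hS : MeasurableSet ((Set.Icc (0:ℝ) 1) ×ˢ (Set.Icc (0:ℝ) 1)) :=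
    measurableSet_Icc.prod measurableSet_Icc
  set T : Set ℝ := {0, 1/10, 1/5} with hT
  have hTfin : T.Finite := (Set.finite_singleton _).insert _ |>.insert _
  have hT0 : (volume : Measure ℝ) T = 0 := hTfin.measure_zero _
  have hbad1 : (volume : Measure (ℝ×ℝ)) {p | p.1 ∈ T} = 0 := by
    have he : {p : ℝ×ℝ | p.1 ∈ T} = T ×ˢ (univ : Set ℝ) := by
      ext p; simp [Set.mem_prod]
    rw [he, Measure.volume_eq_prod, Measure.prod_prod, hT0, zero_mul]
  have hbad2 : (volume : Measure (ℝ×ℝ)) {p | p.2 ∈ T} = 0 := by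
    have he : {p : ℝ×ℝ | p.2 ∈ T} = (univ : Set ℝ) ×ˢ T := by
      ext p; simp [Set.mem_prod]
    rw [he, Measure.volume_eq_prod, Measure.prod_prod, hT0, mul_zero]
  -- replace e₂Trunc by gFun
  have step1 : (∫ p in (Set.Icc (0:ℝ) 1) ×ˢ (Set.Icc (0:ℝ) 1), e₂Trunc p.1 p.2)
      = ∫ p in (Set.Icc (0:ℝ) 1) ×ˢ (Set.Icc (0:ℝ) 1), gFun p.1 p.2 := by
    apply setIntegral_congr_ae hS
    filter_upwards [measure_eq_zero_iff_ae_notMem.mp hbad1, measure_eq_zero_iff_ae_notMem.mp hbad2]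
      with p hp1 hp2 hpS
    simp only [Set.mem_setOf_eq, hT, Set.mem_insert_iff, Set.mem_singleton_iff, not_or] at hp1 hp2
    exact e2_eq_g (lt_of_le_of_ne hpS.1.1 (Ne.symm hp1.1)) (lt_of_le_of_ne hpS.2.1 (Ne.symm hp2.1))
      hp1.2.1 hp1.2.2 hp2.2.1 hp2.2.2
  -- integrability of gFun on the square
  have hint : IntegrableOn (fun p : ℝ×ℝ => gFun p.1 p.2)
      ((Set.Icc (0:ℝ) 1) ×ˢ (Set.Icc (0:ℝ) 1)) volume := by
    apply Measure.integrableOn_of_bounded (M := 10)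
    · exact ((isCompact_Icc.prod isCompact_Icc).measure_lt_top).ne
    · exact g_meas.aestronglyMeasurable
    · rw [ae_restrict_iff' hS]
      exact ae_of_all _ fun p hp => g_abs hp.1 hp.2
  -- Fubini
  have hvol : (volume : Measure (ℝ×ℝ)) = (volume : Measure ℝ).prod volume :=
    Measure.volume_eq_prod ℝ ℝ
  have hint' : IntegrableOn (fun p : ℝ×ℝ => gFun p.1 p.2)
      ((Set.Icc (0:ℝ) 1) ×ˢ (Set.Icc (0:ℝ) 1)) ((volume : Measure ℝ).prod volume) := by
    rwa [hvol] at hint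
  have step2 : (∫ p in (Set.Icc (0:ℝ) 1) ×ˢ (Set.Icc (0:ℝ) 1), gFun p.1 p.2)
      = ∫ x in Icc (0:ℝ) 1, ∫ y in Icc (0:ℝ) 1, gFun x y := by
    rw [hvol]
    exact setIntegral_prod _ hint'
  have hinner : ∀ x : ℝ, (∫ y in Icc (0:ℝ) 1, gFun x y) = HFun x := by
    intro x
    rw [integral_Icc_eq_integral_Ioc, ← intervalIntegral.integral_of_le (by norm_num : (0:ℝ) ≤ 1)]
    rfl
  -- integrability of HFun
  have hHint : IntegrableOn HFun (Icc (0:ℝ) 1) volume := by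
    have h2 := hint'
    rw [IntegrableOn, ← Measure.prod_restrict] at h2
    have h3 := h2.integral_prod_left
    refine h3.congr (ae_of_all _ fun x => ?_)
    exact hinner x
  have step3 : (∫ x in Icc (0:ℝ) 1, ∫ y in Icc (0:ℝ) 1, gFun x y)
      = ∫ x in (0:ℝ)..1, HFun x := by
    simp_rw [hinner]
    rw [integral_Icc_eq_integral_Ioc, ← intervalIntegral.integral_of_le (by norm_num : (0:ℝ) ≤ 1)]
  -- split [0,1] at 1/10 and 1/5
  have j1 : IntervalIntegrable HFun volume 0 (1/10) :=
    intervalIntegrable_iff.mpr (hHint.mono_set (sub01 le_rfl (by norm_num) (by norm_num)))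
  have j2 : IntervalIntegrable HFun volume (1/10) (1/5) :=
    intervalIntegrable_iff.mpr (hHint.mono_set (sub01 (by norm_num) (by norm_num) (by norm_num)))
  have j3 : IntervalIntegrable HFun volume (1/5) 1 :=
    intervalIntegrable_iff.mpr (hHint.mono_set (sub01 (by norm_num) le_rfl (by norm_num)))
  have pA : ∫ x in (0:ℝ)..(1/10), HFun x = 17/300 := by
    rw [intervalIntegral.integral_congr (g := fun q => 5*q^2 + 8*q + 3/20)]
    · have hF : ∀ x ∈ Set.uIcc (0:ℝ) (1/10), HasDerivAt
          (fun x : ℝ => 5/3*x^3 + 4*x^2 + 3/20*x) (5*x^2 + 8*x + 3/20) x := by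
        intro x _
        have h1 := (hasDerivAt_pow 3 x).const_mul (5/3 : ℝ)
        have h2 := (hasDerivAt_pow 2 x).const_mul (4 : ℝ)
        have h3 := (hasDerivAt_id x).const_mul (3/20 : ℝ)
        refine ((h1.add h2).add h3).congr_deriv ?_
        push_cast
        ring
      rw [intervalIntegral.integral_eq_sub_of_hasDerivAt hF
        ((Continuous.intervalIntegrable (by continuity) _ _))]
      norm_num
    · intro x hx
      rw [Set.uIcc_of_le (by norm_num), Set.mem_Icc] at hx
      exact H_low hx.1 hx.2
  have pB : ∫ x in (1/10:ℝ)..(1/5), HFun x = 1/10 := by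
    rw [int_congr_finite (g := fun _ => (1:ℝ)) ∅ Set.finite_empty]
    · simp; norm_num
    · intro x hx _
      rw [Set.uIoc_of_le (by norm_num), Set.mem_Ioc] at hx
      exact H_mid hx.1 hx.2
  have pC : ∫ x in (1/5:ℝ)..1, HFun x = 19/25 := by
    rw [int_congr_finite (g := fun _ => (19/20:ℝ)) ∅ Set.finite_empty]
    · simp; norm_num
    · intro x hx _
      rw [Set.uIoc_of_le (by norm_num), Set.mem_Ioc] at hx
      exact H_high hx.1 hx.2
  rw [step1, step2, step3,
    ← intervalIntegral.integral_add_adjacent_intervals (j1.trans j2) j3,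
    ← intervalIntegral.integral_add_adjacent_intervals j1 j2, pA, pB, pC]
  norm_num

theorem two_samples_worse_than_one :
    (∫ q in (0:ℝ)..1, rTrunc q) = 19/20 ∧
    (∫ p in (Set.Icc (0:ℝ) 1) ×ˢ (Set.Icc (0:ℝ) 1), e₂Trunc p.1 p.2) = 11/12 ∧
    (∫ p in (Set.Icc (0:ℝ) 1) ×ˢ (Set.Icc (0:ℝ) 1), e₂Trunc p.1 p.2)
      < ∫ q in (0:ℝ)..1, rTrunc q := by
  refine ⟨one_sample, two_sample, ?_⟩
  rw [one_sample, two_sample]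
  norm_num
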